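/- Covariance recursion for DEKI: for every t ∈ ℕ, the sample covariance of the DEKI ensemble satisfies the exact identity C_{t+1} = C_t − 2h·C_t·A_{t+1}^{(α)}·C_t + h²·C_t·A_{t+1}^{(α)}·C_t·A_{t+1}^{(α)}·C_t. -/

import Mathlib

open Matrix BigOperators

noncomputable section

/-- Sample mean of an ensemble. -/
def ensMean {d : ℕ} (J : ℕ) (z : Fin J → Fin d → ℝ) : Fin d → ℝ :=
  (J : ℝ)⁻¹ • ∑ j, z j

/-- Ensemble spread `e^{(j)} = z^{(j)} - z̄`. -/
def ensSpread {d : ℕ} (J : ℕ) (z : Fin J → Fin d → ℝ) (j : Fin J) : Fin d → ℝ :=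
  z j - ensMean J z

/-- Sample covariance `C = (1/J) ∑_j e^{(j)} (e^{(j)})ᵀ`. -/
def ensCov {d : ℕ} (J : ℕ) (z : Fin J → Fin d → ℝ) : Matrix (Fin d) (Fin d) ℝ :=
  (J : ℝ)⁻¹ • ∑ j, vecMulVec (ensSpread J z j) (ensSpread J z j)

lemma vecMulVec_mulVec_mulVec {d : ℕ} (A B : Matrix (Fin d) (Fin d) ℝ) (x y : Fin d → ℝ) :
    vecMulVec (A *ᵥ x) (B *ᵥ y) = A * vecMulVec x y * Bᵀ := by
  rw [vecMulVec_eq Unit, vecMulVec_eq Unit, replicateCol_mulVec, replicateRow_mulVec, transpose_mul,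
    show (Matrix.replicateCol Unit y)ᵀ = Matrix.replicateRow Unit y from rfl]
  simp [Matrix.mul_assoc]

lemma ensCov_transpose {d J : ℕ} (z : Fin J → Fin d → ℝ) :
    (ensCov J z)ᵀ = ensCov J z := by
  unfold ensCov
  rw [transpose_smul, Matrix.transpose_sum]
  congr 1
  refine Finset.sum_congr rfl fun j _ => ?_
  ext i k
  simp [vecMulVec_apply, mul_comm]

lemma ensSpread_affine {d J : ℕ} (hJ : 0 < J) (B : Matrix (Fin d) (Fin d) ℝ)
    (c : Fin d → ℝ) (z z' : Fin J → Fin d → ℝ)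
    (hz : ∀ j, z' j = B *ᵥ z j + c) (j : Fin J) :
    ensSpread J z' j = B *ᵥ ensSpread J z j := by
  have hJ' : (J : ℝ) ≠ 0 := Nat.cast_ne_zero.mpr hJ.ne'
  have hsum : ∑ j, B *ᵥ z j = B *ᵥ ∑ j, z j := (map_sum (Matrix.mulVecLin B) _ _).symm
  unfold ensSpread ensMean
  simp only [hz]
  rw [Finset.sum_add_distrib, Finset.sum_const, Finset.card_univ, Fintype.card_fin, hsum,
    smul_add, mulVec_sub, mulVec_smul]
  rw [← Nat.cast_smul_eq_nsmul ℝ, smul_smul, inv_mul_cancel₀ hJ', one_smul]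
  abel

theorem deki_covariance_recursion
    {d p J : ℕ} (hd : 0 < d) (hp : 0 < p) (hJ : 0 < J)
    (α h : ℝ) (hα : 0 < α) (hh : 0 < h)
    (S : ℕ → Matrix (Fin p) (Fin d) ℝ) (u : ℕ → Fin p → ℝ)
    (z : ℕ → Fin J → Fin d → ℝ)
    (hupd : ∀ t j, z (t+1) j = z t j -
      h • ((ensCov J (z t)) *ᵥ ((S (t+1))ᵀ *ᵥ ((S (t+1)) *ᵥ (z t j) - u (t+1)) + α • z t j)))
    (Aα : ℕ → Matrix (Fin d) (Fin d) ℝ)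
    (hAα : ∀ t, Aα t = (S t)ᵀ * (S t) + α • (1 : Matrix (Fin d) (Fin d) ℝ)) :
    ∀ t : ℕ, ensCov J (z (t+1)) =
      ensCov J (z t)
      - (2*h) • (ensCov J (z t) * Aα (t+1) * ensCov J (z t))
      + h^2 • (ensCov J (z t) * Aα (t+1) * ensCov J (z t) * Aα (t+1) * ensCov J (z t)) := by
  intro t
  set C := ensCov J (z t) with hC
  set A := Aα (t+1) with hA
  have hAsym : Aᵀ = A := by
    rw [hA, hAα]
    simp [transpose_add, transpose_mul, transpose_smul]
  have hCsym : Cᵀ = C := ensCov_transpose (z t)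
  set B : Matrix (Fin d) (Fin d) ℝ := 1 - h • (C * A) with hB
  have hzB : ∀ j, z (t+1) j = B *ᵥ z t j + h • (C *ᵥ ((S (t+1))ᵀ *ᵥ u (t+1))) := by
    intro j
    rw [hupd t j, hB, hA, hAα]
    simp only [← hC, mulVec_sub, mulVec_add, mulVec_smul, sub_mulVec, add_mulVec,
      one_mulVec, smul_mulVec, ← Matrix.mulVec_mulVec, smul_sub, smul_add]
    module
  have hspread : ∀ j, ensSpread J (z (t+1)) j = B *ᵥ ensSpread J (z t) j :=
    ensSpread_affine hJ B _ (z t) (z (t+1)) hzB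
  have hcov : ensCov J (z (t+1)) = B * C * Bᵀ := by
    rw [hC]
    unfold ensCov
    simp only [hspread, vecMulVec_mulVec_mulVec]
    rw [← Finset.sum_mul, ← Finset.mul_sum, Matrix.mul_smul, Matrix.smul_mul]
  rw [hcov, hB, transpose_sub, transpose_one, transpose_smul, transpose_mul, hAsym, hCsym]
  simp only [Matrix.mul_sub, Matrix.sub_mul, Matrix.mul_one, Matrix.one_mul,
    Matrix.mul_smul, Matrix.smul_mul, smul_smul, smul_sub, Matrix.mul_assoc]
  module
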